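/- Let A be a commutative noetherian ring and M a finitely generated A-module. For each associated prime p of M let T_p(M) = {m ∈ M | s•m = 0 for some s ∈ A \ p}, a submodule of M, and set Q_p = M / T_p(M). Then ann(M) equals the intersection, over all associated primes p of M, of the annihilators ann(Q_p). -/

import Mathlib

/-- For a prime ideal `p`, the submodule `T_p(M) = {m ∈ M | s • m = 0 for some s ∉ p}`,
the kernel of the localization map `M → M_p`. -/
def relTorsion {A : Type*} [CommRing A] (M : Type*) [AddCommGroup M] [Module A M]
    (p : Ideal A) (hp : p.IsPrime) : Submodule A M where
  carrier := {m | ∃ s ∉ p, s • m = 0}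
  zero_mem' := ⟨1, fun h => hp.ne_top (Ideal.eq_top_of_isUnit_mem p h isUnit_one), smul_zero 1⟩
  add_mem' := by
    rintro x y ⟨s, hs, hsx⟩ ⟨t, ht, hty⟩
    refine ⟨s * t, fun h => ((hp.mem_or_mem h).elim hs ht), ?_⟩
    have h1 : (s * t) • x = 0 := by rw [mul_comm, mul_smul, hsx, smul_zero]
    have h2 : (s * t) • y = 0 := by rw [mul_smul, hty, smul_zero]
    rw [smul_add, h1, h2, add_zero]
  smul_mem' := by
    rintro a x ⟨s, hs, hsx⟩
    exact ⟨s, hs, by rw [smul_comm, hsx, smul_zero]⟩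

/-- Over a commutative noetherian ring, the annihilator of a finitely generated module `M`
is the intersection, over the associated primes `p` of `M`, of the annihilators of the
quotients `Q_p = M / T_p(M)`. -/
theorem annihilator_eq_iInf_annihilator_quotient_relTorsion
    {A : Type*} [CommRing A] [IsNoetherianRing A]
    {M : Type*} [AddCommGroup M] [Module A M] [Module.Finite A M] :
    Module.annihilator A M =
      ⨅ p : associatedPrimes A M,
        Module.annihilator A (M ⧸ relTorsion M (p : Ideal A) p.2.isPrime) := by
  apply le_antisymm
  · refine le_iInf fun p => ?_
    intro a ha
    rw [Module.mem_annihilator] at ha ⊢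
    intro x
    obtain ⟨m, rfl⟩ := Submodule.Quotient.mk_surjective _ x
    rw [← Submodule.Quotient.mk_smul, ha, Submodule.Quotient.mk_zero]
  · intro a ha
    rw [Module.mem_annihilator]
    intro m
    by_contra hm
    have : Nontrivial (A ∙ (a • m)) := by
      rw [Submodule.nontrivial_iff_ne_bot, ne_eq, Submodule.span_singleton_eq_bot]
      exact hm
    obtain ⟨p, hp⟩ := associatedPrimes.nonempty A (A ∙ (a • m))
    have hpM : p ∈ associatedPrimes A M :=
      hp.map_of_injective (Submodule.subtype _) (Submodule.injective_subtype _)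
    obtain ⟨hprime, x, hx⟩ := hp
    obtain ⟨c, hc⟩ := Submodule.mem_span_singleton.mp x.2
    have ha' := Submodule.mem_iInf _ |>.mp ha (⟨p, hpM⟩ : associatedPrimes A M)
    have h0 : a • (Submodule.Quotient.mk m :
        M ⧸ relTorsion M p hprime) = 0 := Module.mem_annihilator.mp ha' _
    rw [← Submodule.Quotient.mk_smul, Submodule.Quotient.mk_eq_zero] at h0
    obtain ⟨s, hs, hsam⟩ := h0
    apply hs
    rw [hx]
    apply Ideal.le_radical
    rw [Submodule.mem_colon_singleton, Submodule.mem_bot]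
    apply Subtype.ext
    show s • (x : M) = 0
    rw [← hc, smul_comm, hsam, smul_zero]
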